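/- Let T be a pruned tree on a non-empty countable set A, let X be the set of infinite branches of T with its cylinder-set topology, and let f : X → ℝ. The following are equivalent: (1) Player II has a winning strategy in the game Γ'(f); (2) Player II has winning strategies in both games Γ(f) and Γ(−f); (3) f is of Baire class 1, i.e., f is the pointwise limit of a sequence of continuous functions X → ℝ. -/

import Mathlib

open Filter Topology

/-- The initial segment `(x₀, …, x_{n-1})` of an infinite sequence `x`. -/
def initSeg {β : Type*} (x : ℕ → β) (n : ℕ) : List β :=
  List.ofFn fun i : Fin n => x i

/-- `T` is a pruned tree on `A`: it contains the empty sequence, is closed under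
prefixes, and every element has a proper extension in `T`. -/
def IsPrunedTree {A : Type*} (T : Set (List A)) : Prop :=
  [] ∈ T ∧ (∀ s ∈ T, ∀ t : List A, t <+: s → t ∈ T) ∧ ∀ s ∈ T, ∃ a : A, s ++ [a] ∈ T

/-- The space `X` of infinite branches of the tree `T`, topologized as a subspace of
the product `ℕ → A` (with `A` discrete); this is exactly the cylinder-set topology. -/
abbrev Branches {A : Type*} (T : Set (List A)) : Type _ :=
  {x : ℕ → A // ∀ n : ℕ, initSeg x n ∈ T}

/-- The cylinder set `O(s)` of all branches with initial segment `s`. -/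
def cyl {A : Type*} (T : Set (List A)) (s : List A) : Set (Branches T) :=
  {x | initSeg x.val s.length = s}

/-- `f : X → ℝ` is a limsup function: there is `u` defined on finite sequences with
`f x = limsup_{t → ∞} u (x₀, …, x_t)` for every branch `x` (the limsup being computed
in the extended reals and required to equal the real number `f x`). -/
def IsLimsupFunction {A : Type*} {T : Set (List A)} (f : Branches T → ℝ) : Prop :=
  ∃ u : List A → ℝ, ∀ x : Branches T,
    (f x : EReal) = Filter.limsup (fun t : ℕ => (u (initSeg x.val (t + 1)) : EReal)) Filter.atTop

/-- `f` is of Baire class 1: a pointwise limit of continuous functions. -/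
def BaireClassOne {X : Type*} [TopologicalSpace X] (f : X → ℝ) : Prop :=
  ∃ g : ℕ → X → ℝ, (∀ n, Continuous (g n)) ∧
    ∀ x, Filter.Tendsto (fun n => g n x) Filter.atTop (nhds (f x))

/-- A Cantor set: a subset homeomorphic to the Cantor space `2^ℕ`. -/
def IsCantorSet {X : Type*} [TopologicalSpace X] (C : Set X) : Prop :=
  Nonempty (C ≃ₜ (ℕ → Bool))

/-- A Bernstein set: neither it nor its complement contains a nonempty perfect set. -/
def IsBernsteinSet {X : Type*} [TopologicalSpace X] (B : Set X) : Prop :=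
  ∀ P : Set X, Perfect P → P.Nonempty → ¬ P ⊆ B ∧ ¬ P ⊆ Bᶜ

/-- A co-analytic set: the complement of an analytic set. -/
def IsCoanalytic {X : Type*} [TopologicalSpace X] (s : Set X) : Prop :=
  MeasureTheory.AnalyticSet sᶜ

/-- The sequence of moves produced by Player I's strategy `σ` against the sequence `v`
of moves of Player II: Player I's `n`-th move depends on `(v₀, …, v_{n-1})`. -/
def playI {A M : Type*} (σ : List M → A) (v : ℕ → M) : ℕ → A :=
  fun n => σ (initSeg v n)

/-- Player II has a winning strategy in the game `Γ(f)`: a strategy for Player II assigns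
to each position `(x₀, …, x_t)` of moves of Player I a real number `v_t` (Player II's own
previous moves being determined), and it is winning if for every run, i.e. every branch
`x` that Player I may produce, `f x = limsup_{t → ∞} v_t`. -/
def PlayerIIWinsGamma {A : Type*} {T : Set (List A)} (f : Branches T → ℝ) : Prop :=
  ∃ τ : List A → ℝ, ∀ x : Branches T,
    (f x : EReal) = Filter.limsup (fun t : ℕ => (τ (initSeg x.val (t + 1)) : EReal)) Filter.atTop

/-- Player I has a winning strategy in the game `Γ_R(f)` where Player II's moves are
restricted to `R`: a strategy for Player I assigns to each position `(v₀, …, v_{n-1})` of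
moves of Player II a point of `A`, and it is winning if against every sequence of moves
of Player II in `R` the moves of Player I are legal (all initial segments lie in `T`) and
the resulting branch `x` satisfies `f x ≠ limsup_{t → ∞} v_t`. -/
def PlayerIWinsGammaR {A : Type*} {T : Set (List A)} (R : Set ℝ) (f : Branches T → ℝ) :
    Prop :=
  ∃ σ : List ℝ → A, ∀ v : ℕ → ℝ, (∀ t, v t ∈ R) →
    ∃ h : ∀ n : ℕ, initSeg (playI σ v) n ∈ T,
      (f ⟨playI σ v, h⟩ : EReal) ≠ Filter.limsup (fun t : ℕ => (v t : EReal)) Filter.atTop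

/-- Player I has a winning strategy in the game `Γ(f)`. -/
def PlayerIWinsGamma {A : Type*} {T : Set (List A)} (f : Branches T → ℝ) : Prop :=
  ∃ σ : List ℝ → A, ∀ v : ℕ → ℝ,
    ∃ h : ∀ n : ℕ, initSeg (playI σ v) n ∈ T,
      (f ⟨playI σ v, h⟩ : EReal) ≠ Filter.limsup (fun t : ℕ => (v t : EReal)) Filter.atTop

/-- Player II has a winning strategy in the game `Γ'(f)`, in which Player II's moves are
pairs `(v_t, w_t)` of reals and Player II wins a run iff
`f x = limsup_{t → ∞} v_t = liminf_{t → ∞} w_t`. -/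
def PlayerIIWinsGamma' {A : Type*} {T : Set (List A)} (f : Branches T → ℝ) : Prop :=
  ∃ τ : List A → ℝ × ℝ, ∀ x : Branches T,
    (f x : EReal) =
      Filter.limsup (fun t : ℕ => ((τ (initSeg x.val (t + 1))).1 : EReal)) Filter.atTop ∧
    (f x : EReal) =
      Filter.liminf (fun t : ℕ => ((τ (initSeg x.val (t + 1))).2 : EReal)) Filter.atTop

/-- Player I has a winning strategy in the game `Γ'(f)`. -/
def PlayerIWinsGamma' {A : Type*} {T : Set (List A)} (f : Branches T → ℝ) : Prop :=
  ∃ σ : List (ℝ × ℝ) → A, ∀ v : ℕ → ℝ × ℝ,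
    ∃ h : ∀ n : ℕ, initSeg (playI σ v) n ∈ T,
      ¬ ((f ⟨playI σ v, h⟩ : EReal) =
            Filter.limsup (fun t : ℕ => ((v t).1 : EReal)) Filter.atTop ∧
         (f ⟨playI σ v, h⟩ : EReal) =
            Filter.liminf (fun t : ℕ => ((v t).2 : EReal)) Filter.atTop)

section Aux

lemma initSeg_length' {β : Type*} (x : ℕ → β) (n : ℕ) : (initSeg x n).length = n := by
  simp [initSeg]

lemma initSeg_eq_iff {β : Type*} {x y : ℕ → β} {n : ℕ} :
    initSeg x n = initSeg y n ↔ ∀ i < n, x i = y i := by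
  simp only [initSeg, List.ofFn_inj]
  constructor
  · intro h i hi; exact congrFun h ⟨i, hi⟩
  · intro h; funext i; exact h i i.2

lemma exists_branch_ext {A : Type*} [Nonempty A] {T : Set (List A)} (hT : IsPrunedTree T)
    {s : List A} (hs : s ∈ T) :
    ∃ x : Branches T, initSeg x.val s.length = s := by
  classical
  obtain ⟨-, hpre, hext⟩ := hT
  have step : ∀ l : {l : List A // l ∈ T},
      {l' : {l : List A // l ∈ T} // l.val <+: l'.val ∧ l'.val.length = l.val.length + 1} := by
    intro l
    choose a ha using hext l.val l.2
    exact ⟨⟨l.val ++ [a], ha⟩, ⟨[a], rfl⟩, by simp⟩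
  let chain : ℕ → {l : List A // l ∈ T} := fun n => Nat.rec ⟨s, hs⟩ (fun _ l => (step l).val) n
  have hlen : ∀ n, (chain n).val.length = s.length + n := by
    intro n; induction n with
    | zero => rfl
    | succ n ih => have := (step (chain n)).2.2; simp only [chain] at *; omega
  have hchain : ∀ n m, n ≤ m → (chain n).val <+: (chain m).val := by
    intro n m h
    induction m with
    | zero => simp_all
    | succ m ih =>
      rcases Nat.lt_or_ge n (m+1) with h' | h'
      · exact (ih (by omega)).trans (step (chain m)).2.1
      · have : n = m + 1 := by omega
        subst this; rfl
  set a0 : A := Classical.arbitrary A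
  set x : ℕ → A := fun k => (chain (k+1)).val.getD k a0 with hx
  have hxval : ∀ n k, k < (chain n).val.length → (chain n).val.getD k a0 = x k := by
    intro n k hk
    have hk2 : k < (chain (k+1)).val.length := by rw [hlen (k+1)]; omega
    show _ = (chain (k+1)).val.getD k a0
    rw [List.getD_eq_getElem _ _ hk, List.getD_eq_getElem _ _ hk2]
    rcases le_or_gt n (k+1) with h | h
    · exact List.IsPrefix.getElem (hchain n (k+1) h) hk
    · exact (List.IsPrefix.getElem (hchain (k+1) n (by omega)) hk2).symm
  have hseg : ∀ m, initSeg x m = (chain m).val.take m := by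
    intro m
    apply List.ext_getElem
    · simp [initSeg, hlen]
    · intro i h1 h2
      simp only [initSeg, List.getElem_ofFn, List.getElem_take]
      have := hxval m i (by rw [hlen]; simp [initSeg] at h1; omega)
      rw [List.getD_eq_getElem _ _ (by rw [hlen m]; simp [initSeg] at h1; omega)] at this
      exact this.symm
  refine ⟨⟨x, fun m => ?_⟩, ?_⟩
  · rw [hseg m]
    exact hpre _ (chain m).2 _ (List.take_prefix _ _)
  · rw [hseg s.length]
    have := hchain 0 s.length (Nat.zero_le _)
    exact (List.prefix_iff_eq_take.mp this).symm

variable {A : Type*} [TopologicalSpace A] [DiscreteTopology A] {T : Set (List A)}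

lemma mem_nhds_iff_cylinder {x : Branches T} {s : Set (Branches T)} :
    s ∈ 𝓝 x ↔ ∃ n, {y : Branches T | initSeg y.val n = initSeg x.val n} ⊆ s := by
  rw [nhds_induced, Filter.mem_comap]
  constructor
  · rintro ⟨t, ht, hts⟩
    rw [nhds_pi, Filter.mem_pi] at ht
    obtain ⟨I, hIfin, u, hu, hsub⟩ := ht
    obtain ⟨n, hn⟩ := hIfin.bddAbove
    refine ⟨n + 1, fun y hy => ?_⟩
    apply hts
    apply hsub
    intro i hi
    have hxy : y.val i = x.val i := initSeg_eq_iff.mp hy i (by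
      have := hn hi; omega)
    rw [hxy]
    have := hu i
    rwa [nhds_discrete, Filter.mem_pure] at this
  · rintro ⟨n, hn⟩
    refine ⟨{z : ℕ → A | ∀ i < n, z i = x.val i}, ?_, fun y hy => hn (initSeg_eq_iff.mpr hy)⟩
    rw [nhds_pi, Filter.mem_pi]
    refine ⟨Set.Iio n, Set.finite_Iio n, fun i => {x.val i}, fun i => ?_, fun z hz i hi => hz i hi⟩
    rw [nhds_discrete, Filter.mem_pure]; rfl

lemma continuous_of_locally_constant {g : Branches T → ℝ}
    (h : ∀ x : Branches T, ∃ n, ∀ y : Branches T,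
      initSeg y.val n = initSeg x.val n → g y = g x) : Continuous g := by
  rw [continuous_iff_continuousAt]
  intro x
  obtain ⟨n, hn⟩ := h x
  have hev : ∀ᶠ y in 𝓝 x, g y = g x :=
    mem_nhds_iff_cylinder.mpr ⟨n, fun y hy => hn y hy⟩
  exact tendsto_const_nhds.congr' (by filter_upwards [hev] with y hy using hy.symm)

lemma continuous_modulus {g : Branches T → ℝ} (hg : Continuous g) (x : Branches T)
    {ε : ℝ} (hε : 0 < ε) :
    ∃ n, ∀ y : Branches T, initSeg y.val n = initSeg x.val n → |g y - g x| < ε := by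
  have := (hg.continuousAt (x := x)).preimage_mem_nhds (Metric.ball_mem_nhds (g x) hε)
  obtain ⟨n, hn⟩ := mem_nhds_iff_cylinder.mp this
  exact ⟨n, fun y hy => by have := hn hy; simpa [Metric.mem_ball, Real.dist_eq] using this⟩

end Aux
def rMax (c : ℕ → ℝ) (n : ℕ) : ℕ → ℝ
  | 0 => c n
  | t+1 => max (rMax c n t) (c (n+t+1))

noncomputable def rMin (c : ℕ → ℝ) (n : ℕ) (t : ℕ) : ℝ := - rMax (fun k => - c k) n t

lemma rMax_le_iff {c : ℕ → ℝ} {d : ℝ} {n t : ℕ} :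
    rMax c n t ≤ d ↔ ∀ k, n ≤ k → k ≤ n + t → c k ≤ d := by
  induction t with
  | zero =>
    simp only [rMax]
    constructor
    · intro h k h1 h2
      obtain rfl : k = n := by omega
      exact h
    · exact fun h => h n le_rfl (by omega)
  | succ t ih =>
    simp only [rMax, max_le_iff, ih]
    constructor
    · rintro ⟨h1, h2⟩ k hk1 hk2
      rcases Nat.lt_or_ge k (n+t+1) with h | h
      · exact h1 k hk1 (by omega)
      · have : k = n+t+1 := by omega
        subst this; exact h2
    · intro h
      exact ⟨fun k h1 h2 => h k h1 (by omega), h (n+t+1) (by omega) (by omega)⟩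

lemma le_rMax {c : ℕ → ℝ} {n t k : ℕ} (h1 : n ≤ k) (h2 : k ≤ n + t) :
    c k ≤ rMax c n t := rMax_le_iff.mp le_rfl k h1 h2

lemma rMax_congr {c c' : ℕ → ℝ} {n t : ℕ} (h : ∀ k ≤ n + t, c k = c' k) :
    rMax c n t = rMax c' n t := by
  induction t with
  | zero => simp only [rMax]; exact h n (by omega)
  | succ t ih =>
    simp only [rMax]
    rw [ih (fun k hk => h k (by omega)), h (n+t+1) (by omega)]

lemma le_rMin_iff {c : ℕ → ℝ} {d : ℝ} {n t : ℕ} :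
    d ≤ rMin c n t ↔ ∀ k, n ≤ k → k ≤ n + t → d ≤ c k := by
  unfold rMin
  rw [le_neg, rMax_le_iff]
  exact ⟨fun h k h1 h2 => by have := h k h1 h2; linarith,
    fun h k h1 h2 => by have := h k h1 h2; linarith⟩

lemma rMin_le {c : ℕ → ℝ} {n t k : ℕ} (h1 : n ≤ k) (h2 : k ≤ n + t) :
    rMin c n t ≤ c k := le_rMin_iff.mp le_rfl k h1 h2

lemma rMin_congr {c c' : ℕ → ℝ} {n t : ℕ} (h : ∀ k ≤ n + t, c k = c' k) :
    rMin c n t = rMin c' n t := by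
  unfold rMin
  rw [rMax_congr (fun k hk => by rw [h k hk])]

lemma ereal_coe_neg_limsup (c : ℕ → ℝ) :
    Filter.limsup (fun t => ((-(c t) : ℝ) : EReal)) Filter.atTop
      = - Filter.liminf (fun t => ((c t) : EReal)) Filter.atTop := by
  have : (fun t => ((-(c t) : ℝ) : EReal)) = -(fun t => ((c t) : EReal)) := by
    funext t; simp [EReal.coe_neg]
  rw [this, EReal.limsup_neg]

lemma ereal_coe_neg_liminf (c : ℕ → ℝ) :
    Filter.liminf (fun t => ((-(c t) : ℝ) : EReal)) Filter.atTop
      = - Filter.limsup (fun t => ((c t) : EReal)) Filter.atTop := by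
  have : (fun t => ((-(c t) : ℝ) : EReal)) = -(fun t => ((c t) : EReal)) := by
    funext t; simp [EReal.coe_neg]
  rw [this, EReal.liminf_neg]

lemma real_of_ereal_limsup {c : ℕ → ℝ} {r : ℝ}
    (h : (r : EReal) = Filter.limsup (fun t => ((c t) : EReal)) Filter.atTop) :
    (∀ ε : ℝ, 0 < ε → ∀ᶠ t in Filter.atTop, c t < r + ε) ∧
    (∀ ε : ℝ, 0 < ε → ∃ᶠ t in Filter.atTop, r - ε < c t) := by
  constructor
  · intro ε hε
    have h1 : Filter.limsup (fun t => ((c t) : EReal)) Filter.atTop < ((r + ε : ℝ) : EReal) := by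
      rw [← h]; exact_mod_cast (by linarith : r < r + ε)
    filter_upwards [eventually_lt_of_limsup_lt h1] with t ht
    exact_mod_cast ht
  · intro ε hε
    have h1 : (((r - ε : ℝ)) : EReal) < Filter.limsup (fun t => ((c t) : EReal)) Filter.atTop := by
      rw [← h]; exact_mod_cast (by linarith : r - ε < r)
    refine (frequently_lt_of_lt_limsup (by isBoundedDefault) h1).mono fun t ht => ?_
    exact_mod_cast ht

lemma real_of_ereal_liminf {c : ℕ → ℝ} {r : ℝ}
    (h : (r : EReal) = Filter.liminf (fun t => ((c t) : EReal)) Filter.atTop) :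
    (∀ ε : ℝ, 0 < ε → ∀ᶠ t in Filter.atTop, r - ε < c t) ∧
    (∀ ε : ℝ, 0 < ε → ∃ᶠ t in Filter.atTop, c t < r + ε) := by
  have h' : ((-r : ℝ) : EReal) = Filter.limsup (fun t => ((-(c t) : ℝ) : EReal)) Filter.atTop := by
    rw [ereal_coe_neg_limsup, ← h, EReal.coe_neg]
  obtain ⟨h1, h2⟩ := real_of_ereal_limsup h'
  constructor
  · intro ε hε
    filter_upwards [h1 ε hε] with t ht; linarith
  · intro ε hε
    exact (h2 ε hε).mono fun t ht => by linarith

lemma limsup_liminf_to_baire {A : Type*} [TopologicalSpace A] [DiscreteTopology A]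
    {T : Set (List A)} (f : Branches T → ℝ) (u v : List A → ℝ)
    (hu : ∀ x : Branches T,
      (f x : EReal) = Filter.limsup (fun t : ℕ => (u (initSeg x.val (t + 1)) : EReal)) Filter.atTop)
    (hv : ∀ x : Branches T,
      (f x : EReal) = Filter.liminf (fun t : ℕ => (v (initSeg x.val (t + 1)) : EReal)) Filter.atTop) :
    BaireClassOne f := by
  classical
  set a : Branches T → ℕ → ℝ := fun x k => u (initSeg x.val (k+1)) with ha
  set b : Branches T → ℕ → ℝ := fun x k => v (initSeg x.val (k+1)) with hb
  have hU : ∀ x : Branches T,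
      (∀ ε : ℝ, 0 < ε → ∀ᶠ t in Filter.atTop, a x t < f x + ε) ∧
      (∀ ε : ℝ, 0 < ε → ∃ᶠ t in Filter.atTop, f x - ε < a x t) :=
    fun x => real_of_ereal_limsup (hu x)
  have hV : ∀ x : Branches T,
      (∀ ε : ℝ, 0 < ε → ∀ᶠ t in Filter.atTop, f x - ε < b x t) ∧
      (∀ ε : ℝ, 0 < ε → ∃ᶠ t in Filter.atTop, b x t < f x + ε) :=
    fun x => real_of_ereal_liminf (hv x)
  have hEx : ∀ (n : ℕ) (x : Branches T), ∃ t : ℕ,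
      rMin (b x) n t - rMax (a x) n t ≤ 1 / ((n:ℝ)+1) := by
    intro n x
    have hε : (0:ℝ) < 1/(2*((n:ℝ)+1)) := by positivity
    obtain ⟨k, hk, hak⟩ := (Filter.frequently_atTop.mp ((hU x).2 _ hε)) n
    obtain ⟨j, hj, hbj⟩ := (Filter.frequently_atTop.mp ((hV x).2 _ hε)) n
    refine ⟨max k j - n, ?_⟩
    have h1 : f x - 1/(2*((n:ℝ)+1)) ≤ rMax (a x) n (max k j - n) :=
      le_trans (le_of_lt hak) (le_rMax (by omega) (by omega))
    have h2 : rMin (b x) n (max k j - n) ≤ f x + 1/(2*((n:ℝ)+1)) :=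
      le_trans (rMin_le (by omega) (by omega)) (le_of_lt hbj)
    have h3 : 1/(2*((n:ℝ)+1)) + 1/(2*((n:ℝ)+1)) = 1/((n:ℝ)+1) := by
      have h0 : ((n:ℝ)+1) ≠ 0 := by positivity
      field_simp
      norm_num
    linarith
  set tS : ℕ → Branches T → ℕ := fun n x => Nat.find (hEx n x) with htS
  set g : ℕ → Branches T → ℝ :=
    fun n x => min (rMax (a x) n (tS n x)) (rMin (b x) n (tS n x) + 1/((n:ℝ)+1)) with hg
  refine ⟨g, fun n => ?_, fun x => ?_⟩
  · -- continuity
    apply continuous_of_locally_constant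
    intro x
    refine ⟨n + tS n x + 1, fun y hy => ?_⟩
    have hagree : ∀ k ≤ n + tS n x, a y k = a x k ∧ b y k = b x k := by
      intro k hk
      have hseg : initSeg y.val (k+1) = initSeg x.val (k+1) := by
        rw [initSeg_eq_iff] at hy ⊢
        intro i hi; exact hy i (by omega)
      constructor
      · show u (initSeg y.val (k+1)) = u (initSeg x.val (k+1)); rw [hseg]
      · show v (initSeg y.val (k+1)) = v (initSeg x.val (k+1)); rw [hseg]
    have hts : tS n y = tS n x := by
      show Nat.find (hEx n y) = Nat.find (hEx n x)
      rw [Nat.find_eq_iff]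
      constructor
      · rw [rMin_congr (fun k hk => (hagree k hk).2), rMax_congr (fun k hk => (hagree k hk).1)]
        exact Nat.find_spec (hEx n x)
      · intro t ht
        have heq : Nat.find (hEx n x) = tS n x := rfl
        rw [rMin_congr (fun k hk => (hagree k (by omega)).2),
            rMax_congr (fun k hk => (hagree k (by omega)).1)]
        exact Nat.find_min (hEx n x) ht
    show min _ _ = min _ _
    rw [hts, rMax_congr (fun k hk => (hagree k hk).1), rMin_congr (fun k hk => (hagree k hk).2)]
  · -- pointwise convergence
    rw [Metric.tendsto_atTop]
    intro ε hε
    obtain ⟨N1, hN1⟩ := Filter.eventually_atTop.mp ((hU x).1 (ε/3) (by linarith))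
    obtain ⟨N2, hN2⟩ := Filter.eventually_atTop.mp ((hV x).1 (ε/3) (by linarith))
    obtain ⟨N3, hN3⟩ := exists_nat_gt (3/ε)
    refine ⟨max (max N1 N2) N3, fun n hn => ?_⟩
    have hnN1 : N1 ≤ n := le_trans ((le_max_left N1 N2).trans (le_max_left _ N3)) hn
    have hnN2 : N2 ≤ n := le_trans ((le_max_right N1 N2).trans (le_max_left _ N3)) hn
    have hnN3 : N3 ≤ n := le_trans (le_max_right _ N3) hn
    have hmax : rMax (a x) n (tS n x) ≤ f x + ε/3 :=
      rMax_le_iff.mpr fun k h1 h2 => le_of_lt (hN1 k (by omega))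
    have hmin : f x - ε/3 ≤ rMin (b x) n (tS n x) :=
      le_rMin_iff.mpr fun k h1 h2 => le_of_lt (hN2 k (by omega))
    have hP : rMin (b x) n (tS n x) - rMax (a x) n (tS n x) ≤ 1/((n:ℝ)+1) :=
      Nat.find_spec (hEx n x)
    have hsmall : 1/((n:ℝ)+1) < ε/3 := by
      have hc : 3/ε < (n:ℝ)+1 := by
        have h1 : (N3:ℝ) ≤ (n:ℝ) := by exact_mod_cast hnN3
        linarith
      have h2 : 1/((n:ℝ)+1) < 1/(3/ε) := by
        apply one_div_lt_one_div_of_lt (by positivity) hc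
      rwa [one_div_div] at h2
    have hg1 : g n x ≤ rMax (a x) n (tS n x) := min_le_left _ _
    have hg2 : rMin (b x) n (tS n x) - 1/((n:ℝ)+1) ≤ g n x := by
      apply le_min (by linarith) (by linarith [one_div_pos.mpr (by positivity : (0:ℝ) < (n:ℝ)+1)])
    rw [Real.dist_eq, abs_lt]
    constructor <;> linarith

lemma baire_to_tendsto {A : Type*} [Nonempty A] [TopologicalSpace A] [DiscreteTopology A]
    {T : Set (List A)} (hT : IsPrunedTree T) (f : Branches T → ℝ) (hf : BaireClassOne f) :
    ∃ τ : List A → ℝ, ∀ x : Branches T,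
      Filter.Tendsto (fun t : ℕ => τ (initSeg x.val (t+1))) Filter.atTop (nhds (f x)) := by
  classical
  obtain ⟨g, hgc, hglim⟩ := hf
  have hE : ∀ s : List A, ∃ y : Branches T, s ∈ T → initSeg y.val s.length = s := by
    intro s
    by_cases h : s ∈ T
    · obtain ⟨y, hy⟩ := exists_branch_ext hT h
      exact ⟨y, fun _ => hy⟩
    · obtain ⟨y, hy⟩ := exists_branch_ext hT hT.1
      exact ⟨y, fun h' => absurd h' h⟩
  choose E hEspec using hE
  set P : List A → ℕ → Prop := fun s n => ∀ k ≤ n, ∀ y z : Branches T,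
      initSeg y.val s.length = s → initSeg z.val s.length = s →
      |g k y - g k z| ≤ 1/((k:ℝ)+1) with hP
  set N : List A → ℕ := fun s => Nat.findGreatest (P s) s.length with hN
  refine ⟨fun s => g (N s) (E s), fun x => ?_⟩
  rw [Metric.tendsto_atTop]
  intro ε hε
  obtain ⟨K1, hK1⟩ := Metric.tendsto_atTop.mp (hglim x) (ε/3) (by linarith)
  obtain ⟨K2, hK2⟩ := exists_nat_gt (3/ε)
  set K := max K1 K2 with hK
  have hmod : ∀ k : ℕ, ∃ m, ∀ y : Branches T, initSeg y.val m = initSeg x.val m →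
      |g k y - g k x| < 1/(2*((k:ℝ)+1)) := fun k => continuous_modulus (hgc k) x (by positivity)
  choose nf hnf using hmod
  set M := Finset.sup (Finset.range (K+1)) nf with hM
  refine ⟨max M K, fun t ht => ?_⟩
  set s := initSeg x.val (t+1) with hs
  have hslen : s.length = t+1 := initSeg_length' _ _
  have hxs : initSeg x.val s.length = s := by rw [hslen]
  have htM : M ≤ t := le_trans (le_max_left M K) ht
  have htK : K ≤ t := le_trans (le_max_right M K) ht
  have hsK : K ≤ s.length := by omega
  have hPsK : P s K := by
    intro k hk y z hy hz
    have hagree : ∀ w : Branches T, initSeg w.val s.length = s →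
        initSeg w.val (nf k) = initSeg x.val (nf k) := by
      intro w hw
      have h1 : nf k ≤ t+1 := by
        have : nf k ≤ M := Finset.le_sup (Finset.mem_range.mpr (by omega))
        omega
      rw [hslen, hs] at hw
      rw [initSeg_eq_iff] at hw ⊢
      intro i hi
      exact hw i (by omega)
    have h1 := hnf k y (hagree y hy)
    have h2 := hnf k z (hagree z hz)
    have h3 : |g k y - g k z| ≤ |g k y - g k x| + |g k x - g k z| := abs_sub_le _ _ _
    have h4 : |g k x - g k z| = |g k z - g k x| := abs_sub_comm _ _
    have h5 : 1/(2*((k:ℝ)+1)) + 1/(2*((k:ℝ)+1)) = 1/((k:ℝ)+1) := by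
      have h0 : ((k:ℝ)+1) ≠ 0 := by positivity
      field_simp
      norm_num
    linarith
  have hNK : K ≤ N s := Nat.le_findGreatest hsK hPsK
  have hPN : P s (N s) := Nat.findGreatest_spec hsK hPsK
  have hsT : s ∈ T := by rw [hs]; exact x.2 (t+1)
  have hEs : initSeg (E s).val s.length = s := hEspec s hsT
  have h1 : |g (N s) (E s) - g (N s) x| ≤ 1/((N s:ℝ)+1) := hPN (N s) le_rfl (E s) x hEs hxs
  have h2 : 1/((N s:ℝ)+1) ≤ 1/((K:ℝ)+1) := by
    apply one_div_le_one_div_of_le (by positivity)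
    have : (K:ℝ) ≤ (N s : ℝ) := by exact_mod_cast hNK
    linarith
  have h3 : 1/((K:ℝ)+1) < ε/3 := by
    have hKK2 : K2 ≤ K := le_max_right K1 K2
    have hc : 3/ε < (K:ℝ)+1 := by
      have : (K2:ℝ) ≤ (K:ℝ) := by exact_mod_cast hKK2
      linarith
    have h2' : 1/((K:ℝ)+1) < 1/(3/ε) := one_div_lt_one_div_of_lt (by positivity) hc
    rwa [one_div_div] at h2'
  have h4 : |g (N s) x - f x| < ε/3 := by
    have hNK1 : K1 ≤ N s := le_trans (le_trans (le_max_left K1 K2) le_rfl) hNK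
    have := hK1 (N s) hNK1
    rwa [Real.dist_eq] at this
  have habs : |g (N s) (E s) - f x| ≤ |g (N s) (E s) - g (N s) x| + |g (N s) x - f x| :=
    abs_sub_le _ _ _
  rw [Real.dist_eq]
  show |g (N (initSeg x.val (t+1))) (E (initSeg x.val (t+1))) - f x| < ε
  rw [← hs]
  linarith

/-- Player II has a winning strategy in `Γ'(f)` iff Player II has winning strategies in
both `Γ(f)` and `Γ(-f)`, iff `f` is of Baire class 1. -/
theorem playerII_wins_gamma'_iff
    {A : Type*} [Countable A] [Nonempty A] [TopologicalSpace A] [DiscreteTopology A]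
    {T : Set (List A)} (hT : IsPrunedTree T) (f : Branches T → ℝ) :
    (PlayerIIWinsGamma' f ↔
      PlayerIIWinsGamma f ∧ PlayerIIWinsGamma (fun x => -f x)) ∧
    (PlayerIIWinsGamma' f ↔ BaireClassOne f) := by
  have hG'G : PlayerIIWinsGamma' f →
      PlayerIIWinsGamma f ∧ PlayerIIWinsGamma (fun x => -f x) := by
    rintro ⟨τ, hτ⟩
    refine ⟨⟨fun s => (τ s).1, fun x => (hτ x).1⟩, ⟨fun s => -(τ s).2, fun x => ?_⟩⟩
    show ((-f x : ℝ) : EReal) = _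
    rw [EReal.coe_neg, (hτ x).2]
    exact (ereal_coe_neg_limsup (fun t => (τ (initSeg x.val (t+1))).2)).symm
  have hG'Baire : PlayerIIWinsGamma' f → BaireClassOne f := by
    rintro ⟨τ, hτ⟩
    exact limsup_liminf_to_baire f (fun s => (τ s).1) (fun s => (τ s).2)
      (fun x => (hτ x).1) (fun x => (hτ x).2)
  have hBG : PlayerIIWinsGamma f ∧ PlayerIIWinsGamma (fun x => -f x) → BaireClassOne f := by
    rintro ⟨⟨u, hu⟩, ⟨w, hw⟩⟩
    apply limsup_liminf_to_baire f u (fun s => -(w s)) hu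
    intro x
    have hwx : ((-f x : ℝ) : EReal)
        = Filter.limsup (fun t : ℕ => ((w (initSeg x.val (t+1)) : ℝ) : EReal)) Filter.atTop :=
      hw x
    have hneg := ereal_coe_neg_liminf (fun t => -(w (initSeg x.val (t+1))))
    have : Filter.liminf (fun t : ℕ => ((-(w (initSeg x.val (t+1))) : ℝ) : EReal)) Filter.atTop
        = - ((-f x : ℝ) : EReal) := by
      rw [ereal_coe_neg_liminf, ← hwx]
    rw [this, EReal.coe_neg, neg_neg]
  have hBaireG' : BaireClassOne f → PlayerIIWinsGamma' f := by
    intro hf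
    obtain ⟨τ, hτ⟩ := baire_to_tendsto hT f hf
    refine ⟨fun s => (τ s, τ s), fun x => ?_⟩
    have h1 : Filter.Tendsto (fun t : ℕ => ((τ (initSeg x.val (t+1)) : ℝ) : EReal))
        Filter.atTop (nhds ((f x : ℝ) : EReal)) :=
      (continuous_coe_real_ereal.tendsto _).comp (hτ x)
    exact ⟨h1.limsup_eq.symm, h1.liminf_eq.symm⟩
  exact ⟨⟨hG'G, fun h => hBaireG' (hBG h)⟩, ⟨hG'Baire, hBaireG'⟩⟩
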